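/- arXiv:2005.13574 — 2 statements merged into one kernel-verified Lean document; each statement's English description precedes it below -/
import Mathlib

section
/- The degenerated NLS map T_{a,b,c} (as above) has Lax representation M_{12}(u₁,u₂,a) M_{13}(v₁,v₂,b) M_{23}(w₁,w₂,c) = M_{23}(z₁,z₂,c) M_{13}(y₁,y₂,b) M_{12}(x₁,x₂,a) with M(x₁,x₂,a) = [[x₁, x₂],[a/x₂, 0]] and the standard 3×3 embeddings M_{ij}. -/
set_option linter.unusedVariables false
set_option maxHeartbeats 1000000

/- STATEMENT 11: Lax representation of the degenerated NLS map with M(x₁,x₂,a) = [[x₁,x₂],[a/x₂,0]]. -/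

noncomputable def u1f (a b c x1 x2 y1 y2 z1 z2 : ℂ) : ℂ := y1
noncomputable def u2f (a b c x1 x2 y1 y2 z1 z2 : ℂ) : ℂ :=
  a*x1*x2*y2/(a*y2*z1 + b*x1*x2*z2)
noncomputable def v1f (a b c x1 x2 y1 y2 z1 z2 : ℂ) : ℂ := x1
noncomputable def v2f (a b c x1 x2 y1 y2 z1 z2 : ℂ) : ℂ := b*x2*z2/(a*c)
noncomputable def w1f (a b c x1 x2 y1 y2 z1 z2 : ℂ) : ℂ := y1*z1/x1
noncomputable def w2f (a b c x1 x2 y1 y2 z1 z2 : ℂ) : ℂ :=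
  (a*y2*z1 + b*x1*x2*z2)/(a*x1*x2)

noncomputable def M12 (x1 x2 a : ℂ) : Matrix (Fin 3) (Fin 3) ℂ :=
  !![x1, x2, 0; a/x2, 0, 0; 0, 0, 1]
noncomputable def M13 (x1 x2 a : ℂ) : Matrix (Fin 3) (Fin 3) ℂ :=
  !![x1, 0, x2; 0, 1, 0; a/x2, 0, 0]
noncomputable def M23 (x1 x2 a : ℂ) : Matrix (Fin 3) (Fin 3) ℂ :=
  !![1, 0, 0; 0, x1, x2; 0, a/x2, 0]

theorem nls_degenerate_lax (a b c x1 x2 y1 y2 z1 z2 : ℂ)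
    (ha : a ≠ 0) (hb : b ≠ 0) (hc : c ≠ 0)
    (hx1 : x1 ≠ 0) (hx2 : x2 ≠ 0) (hy1 : y1 ≠ 0) (hy2 : y2 ≠ 0)
    (hz1 : z1 ≠ 0) (hz2 : z2 ≠ 0)
    (hden : a*y2*z1 + b*x1*x2*z2 ≠ 0) :
    M12 (u1f a b c x1 x2 y1 y2 z1 z2) (u2f a b c x1 x2 y1 y2 z1 z2) a
      * M13 (v1f a b c x1 x2 y1 y2 z1 z2) (v2f a b c x1 x2 y1 y2 z1 z2) b
      * M23 (w1f a b c x1 x2 y1 y2 z1 z2) (w2f a b c x1 x2 y1 y2 z1 z2) c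
      = M23 z1 z2 c * M13 y1 y2 b * M12 x1 x2 a := by
  have hden' : b * x1 * x2 * z2 + a * y2 * z1 ≠ 0 := by
    rw [add_comm]; exact hden
  have h2 : a ^ 2 * y2 * b * x1 ^ 2 * x2 ^ 2 * z2 * c + a ^ 3 * y2 ^ 2 * z1 * x1 * x2 * c ≠ 0 := by
    have : a ^ 2 * y2 * b * x1 ^ 2 * x2 ^ 2 * z2 * c + a ^ 3 * y2 ^ 2 * z1 * x1 * x2 * c
        = a ^ 2 * y2 * x1 * x2 * c * (b * x1 * x2 * z2 + a * y2 * z1) := by ring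
    rw [this]
    exact mul_ne_zero (mul_ne_zero (mul_ne_zero (mul_ne_zero
      (mul_ne_zero (pow_ne_zero 2 ha) hy2) hx1) hx2) hc) hden'
  simp only [u1f,u2f,v1f,v2f,w1f,w2f,M12,M13,M23, Matrix.mul_fin_three]
  ext i j
  fin_cases i <;> fin_cases j <;> simp <;>
    try (first
      | (field_simp; ring)
      | (field_simp; done))
  all_goals (rw [← add_mul]; apply mul_inv_cancel₀; intro h; apply hden; linear_combination h)
  all_goals ring
end

section
/- The three-dimensional map T_{a,b,c}(x,y,z) = ((ay+bz)/(axy), bz/(ac), y) is noninvolutive and does NOT satisfy the parametric functional tetrahedron equation: there exist parameter values a,b,c,d,e,f and points in (ℂ*)⁶ where T^{123}_{a,b,c} ∘ T^{145}_{a,d,e} ∘ T^{246}_{b,d,f} ∘ T^{356}_{c,e,f} and T^{356}_{c,e,f} ∘ T^{246}_{b,d,f} ∘ T^{145}_{a,d,e} ∘ T^{123}_{a,b,c} disagree. -/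
set_option linter.unusedVariables false

/- STATEMENT 13: The map T_{a,b,c}(x,y,z) = ((ay+bz)/(axy), bz/(ac), y) is
noninvolutive and does NOT satisfy the parametric functional tetrahedron
equation. -/

noncomputable def TP (a b c x y z : ℂ) : ℂ × ℂ × ℂ :=
  ((a*y + b*z)/(a*x*y), b*z/(a*c), y)

/-- Variables nonzero (all denominators are then nonzero). -/
def okP (a b c x y z : ℂ) : Prop := x ≠ 0 ∧ y ≠ 0 ∧ z ≠ 0

abbrev V6 := ℂ × ℂ × ℂ × ℂ × ℂ × ℂ

noncomputable def T123 (a b c : ℂ) (v : V6) : V6 :=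
  let t := TP a b c v.1 v.2.1 v.2.2.1
  (t.1, t.2.1, t.2.2, v.2.2.2.1, v.2.2.2.2.1, v.2.2.2.2.2)
noncomputable def T145 (a b c : ℂ) (v : V6) : V6 :=
  let t := TP a b c v.1 v.2.2.2.1 v.2.2.2.2.1
  (t.1, v.2.1, v.2.2.1, t.2.1, t.2.2, v.2.2.2.2.2)
noncomputable def T246 (a b c : ℂ) (v : V6) : V6 :=
  let t := TP a b c v.2.1 v.2.2.2.1 v.2.2.2.2.2
  (v.1, t.1, v.2.2.1, t.2.1, v.2.2.2.2.1, t.2.2)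
noncomputable def T356 (a b c : ℂ) (v : V6) : V6 :=
  let t := TP a b c v.2.2.1 v.2.2.2.2.1 v.2.2.2.2.2
  (v.1, v.2.1, t.1, v.2.2.2.1, t.2.1, t.2.2)

def ok123 (a b c : ℂ) (v : V6) : Prop := okP a b c v.1 v.2.1 v.2.2.1
def ok145 (a b c : ℂ) (v : V6) : Prop := okP a b c v.1 v.2.2.2.1 v.2.2.2.2.1
def ok246 (a b c : ℂ) (v : V6) : Prop := okP a b c v.2.1 v.2.2.2.1 v.2.2.2.2.2
def ok356 (a b c : ℂ) (v : V6) : Prop := okP a b c v.2.2.1 v.2.2.2.2.1 v.2.2.2.2.2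

theorem restricted_map_noninvolutive_and_not_tetrahedron :
    (∃ a b c x y z : ℂ, a ≠ 0 ∧ b ≠ 0 ∧ c ≠ 0 ∧ okP a b c x y z ∧
      okP a b c (TP a b c x y z).1 (TP a b c x y z).2.1 (TP a b c x y z).2.2 ∧
      TP a b c (TP a b c x y z).1 (TP a b c x y z).2.1 (TP a b c x y z).2.2
        ≠ (x, y, z)) ∧
    (∃ a b c d e f : ℂ, ∃ v : V6, a ≠ 0 ∧ b ≠ 0 ∧ c ≠ 0 ∧ d ≠ 0 ∧ e ≠ 0 ∧ f ≠ 0 ∧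
      ok356 c e f v ∧ ok246 b d f (T356 c e f v) ∧
      ok145 a d e (T246 b d f (T356 c e f v)) ∧
      ok123 a b c (T145 a d e (T246 b d f (T356 c e f v))) ∧
      ok123 a b c v ∧ ok145 a d e (T123 a b c v) ∧
      ok246 b d f (T145 a d e (T123 a b c v)) ∧
      ok356 c e f (T246 b d f (T145 a d e (T123 a b c v))) ∧
      T123 a b c (T145 a d e (T246 b d f (T356 c e f v)))
        ≠ T356 c e f (T246 b d f (T145 a d e (T123 a b c v)))) := by
  constructor
  · refine ⟨1, 1, 2, 1, 1, 1, one_ne_zero, one_ne_zero, two_ne_zero, ⟨one_ne_zero, one_ne_zero, one_ne_zero⟩, ?_, ?_⟩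
    · simp only [TP, okP]
      norm_num
    · norm_num [TP, Prod.ext_iff]
  · refine ⟨1, 1, 1, 1, 1, 1, (1, 2, 1, 1, 1, 1), one_ne_zero, one_ne_zero, one_ne_zero,
      one_ne_zero, one_ne_zero, one_ne_zero, ?_, ?_, ?_, ?_, ?_, ?_, ?_, ?_, ?_⟩ <;>
    simp only [T123, T145, T246, T356, TP, okP, ok123, ok145, ok246, ok356] <;>
    norm_num
end
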